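/- Let G be a group generated by elements g_1, ..., g_n satisfying g_i^2 = 1 for all i and (g_i g_j)^2 = 1 whenever |i − j| > 1. Then for any permutations ω, ν of {1, ..., n}, the products g_{ω(1)} g_{ω(2)} ⋯ g_{ω(n)} and g_{ν(1)} g_{ν(2)} ⋯ g_{ν(n)} are conjugate in G. -/

import Mathlib

open List

section Aux

variable {G : Type*} [Group G]

private lemma isConj_mul_swap (a b : G) : IsConj (a * b) (b * a) :=
  isConj_iff.2 ⟨a⁻¹, by group⟩

variable {n : ℕ} {g : Fin n → G}

private lemma commute_of_dist (hinv : ∀ i, g i ^ 2 = 1)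
    (hcomm : ∀ i j : Fin n, 1 < Nat.dist i.val j.val → (g i * g j) ^ 2 = 1)
    (i j : Fin n) (h : Nat.dist i.val j.val ≠ 1) : Commute (g i) (g j) := by
  rcases eq_or_ne i j with rfl | hne
  · exact Commute.refl _
  · have hd : 1 < Nat.dist i.val j.val := by
      have h0 : Nat.dist i.val j.val ≠ 0 := by
        intro h0
        exact hne (Fin.ext (Nat.eq_of_dist_eq_zero h0))
      omega
    have hij : (g i * g j) * (g i * g j) = 1 := by rw [← sq]; exact hcomm i j hd
    have hi : g i * g i = 1 := by rw [← sq]; exact hinv i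
    have hj : g j * g j = 1 := by rw [← sq]; exact hinv j
    have hinvi : (g i)⁻¹ = g i := inv_eq_of_mul_eq_one_right hi
    have hinvj : (g j)⁻¹ = g j := inv_eq_of_mul_eq_one_right hj
    have hrw : (g i * g j)⁻¹ = g i * g j := inv_eq_of_mul_eq_one_right hij
    calc g i * g j = (g i * g j)⁻¹ := hrw.symm
      _ = (g j)⁻¹ * (g i)⁻¹ := mul_inv_rev _ _
      _ = g j * g i := by rw [hinvi, hinvj]

end Aux

section Main

variable {n : ℕ}

/-- position of the index `j` in the word `l` -/
private def pos (l : List (Fin n)) (j : ℕ) : ℕ := (l.map Fin.val).idxOf j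

private def muTerm (l : List (Fin n)) (j : ℕ) : ℕ :=
  if pos l (j + 1) < pos l j then n - j else 0

private def mu (l : List (Fin n)) : ℕ := ∑ j ∈ Finset.range n, muTerm l j

private lemma len_map (l : List (Fin n)) (hl : l ~ List.finRange n) :
    (l.map Fin.val).length = n := by
  rw [length_map, hl.length_eq, length_finRange]

private lemma mem_map_val (l : List (Fin n)) (hl : l ~ List.finRange n) {j : ℕ} (hj : j < n) :
    j ∈ l.map Fin.val := by
  refine mem_map.2 ⟨⟨j, hj⟩, hl.mem_iff.2 (mem_finRange _), rfl⟩

private lemma pos_lt (l : List (Fin n)) (hl : l ~ List.finRange n) {j : ℕ} (hj : j < n) :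
    pos l j < n := by
  have h := idxOf_lt_length_iff.2 (mem_map_val l hl hj)
  rwa [len_map l hl] at h

private lemma pos_inj (l : List (Fin n)) (hl : l ~ List.finRange n) {a b : ℕ}
    (ha : a < n) (hb : b < n) (h : pos l a = pos l b) : a = b :=
  (idxOf_inj (mem_map_val l hl ha)).1 h

private lemma pos_out (l : List (Fin n)) (hl : l ~ List.finRange n) :
    pos l n = n := by
  rw [pos, idxOf_of_notMem, len_map l hl]
  intro h
  obtain ⟨a, _, ha⟩ := mem_map.1 h
  omega

private lemma sorted_case (l : List (Fin n)) (hl : l ~ List.finRange n)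
    (hs : ∀ j : ℕ, j + 1 < n → pos l j < pos l (j + 1)) :
    l = List.finRange n := by
  have hndN : (l.map Fin.val).Nodup :=
    (hl.nodup_iff.2 (nodup_finRange n)).map Fin.val_injective
  have hchain : ∀ a b : ℕ, b < n → a < b → pos l a < pos l b := by
    intro a b hb hab
    induction b with
    | zero => omega
    | succ b ihb =>
      rcases eq_or_lt_of_le (Nat.lt_succ_iff.1 hab) with rfl | hab'
      · exact hs a hb
      · exact lt_trans (ihb (Nat.lt_of_succ_lt hb) hab') (hs b hb)
  have hA : ∀ j : ℕ, j < n → j ≤ pos l j := by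
    intro j
    induction j with
    | zero => exact fun _ => Nat.zero_le _
    | succ j ihj =>
      intro hj
      have h1 := ihj (Nat.lt_of_succ_lt hj)
      have h2 := hs j hj
      omega
  have hB : ∀ d j : ℕ, j < n → j + d = n - 1 → pos l j + d ≤ n - 1 := by
    intro d
    induction d with
    | zero =>
      intro j hjn hj
      have := pos_lt l hl hjn
      omega
    | succ d ihd =>
      intro j hjn hj
      have h3 : j + 1 < n := by omega
      have h1 : j + 1 + d = n - 1 := by omega
      have h2 := ihd (j + 1) h3 h1
      have := hs j h3
      omega
  have hpid : ∀ j : ℕ, j < n → pos l j = j := by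
    intro j hj
    have := hA j hj
    have := hB (n - 1 - j) j hj (by omega)
    omega
  apply List.ext_getElem (by simp [hl.length_eq])
  intro i h1 h2
  have hlen : l.length = n := by rw [hl.length_eq, length_finRange]
  have hin : i < n := by omega
  have hmlen : i < (l.map Fin.val).length := by rw [len_map l hl]; omega
  have hig : pos l ((l[i]).val) = i := by
    have := Nodup.idxOf_getElem hndN i hmlen
    rwa [getElem_map] at this
  have hval : (l[i]).val = i := by
    apply pos_inj l hl (l[i]).isLt hin
    rw [hig, hpid i hin]
  apply Fin.ext
  rw [hval]
  simp [List.getElem_finRange, Fin.cast]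

variable {G : Type*} [Group G] {g : Fin n → G}

private lemma step_lemma (hinv : ∀ i, g i ^ 2 = 1)
    (hcomm : ∀ i j : Fin n, 1 < Nat.dist i.val j.val → (g i * g j) ^ 2 = 1)
    (l : List (Fin n)) (hl : l ~ List.finRange n) (k : ℕ) (hk1 : k + 1 < n)
    (hkL : pos l (k + 1) < pos l k)
    (hkmax : k + 2 < n → pos l (k + 1) < pos l (k + 2)) :
    ∃ l' : List (Fin n), l' ~ List.finRange n ∧
      IsConj ((l.map g).prod) ((l'.map g).prod) ∧ mu l' < mu l := by
  classical
  set v : Fin n := ⟨k + 1, hk1⟩ with hv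
  have hnd : l.Nodup := hl.nodup_iff.2 (nodup_finRange n)
  have hmem : ∀ i : Fin n, i ∈ l := fun i => hl.mem_iff.2 (mem_finRange i)
  obtain ⟨u, w, rfl⟩ := append_of_mem (hmem v)
  have hnd' := hnd
  rw [nodup_append] at hnd'
  obtain ⟨hndu, hndvw, hdisj⟩ := hnd'
  have hvu : v ∉ u := fun h => hdisj v h v mem_cons_self rfl
  have hvw : v ∉ w := (nodup_cons.1 hndvw).1
  have hwu : ∀ a ∈ w, a ∉ u := fun a ha h => hdisj a h a (mem_cons_of_mem v ha) rfl
  -- pass to lists of naturals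
  set U : List ℕ := u.map Fin.val with hU
  set W : List ℕ := w.map Fin.val with hW
  have hvUmem : ∀ a : Fin n, a ∈ u ↔ (a : ℕ) ∈ U := by
    intro a
    constructor
    · intro h; exact mem_map_of_mem h
    · intro h
      obtain ⟨b, hb, hba⟩ := mem_map.1 h
      rwa [← Fin.val_injective hba]
  have hvWmem : ∀ a : Fin n, a ∈ w ↔ (a : ℕ) ∈ W := by
    intro a
    constructor
    · intro h; exact mem_map_of_mem h
    · intro h
      obtain ⟨b, hb, hba⟩ := mem_map.1 h
      rwa [← Fin.val_injective hba]
  have hk1U : (k + 1) ∉ U := fun h => hvu ((hvUmem v).2 h)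
  have hk1W : (k + 1) ∉ W := fun h => hvw ((hvWmem v).2 h)
  have hWU : ∀ a ∈ W, a ∉ U := by
    intro a haW haU
    obtain ⟨b, hb, rfl⟩ := mem_map.1 haW
    exact (hwu b hb) ((hvUmem b).2 haU)
  have hmapL : (u ++ v :: w).map Fin.val = U ++ (k + 1) :: W := by
    simp [hU, hW, hv]
  set l' : List (Fin n) := (u ++ w) ++ [v] with hl'def
  have hmapL' : l'.map Fin.val = (U ++ W) ++ [k + 1] := by
    simp [hl'def, hU, hW, hv]
  have hperm' : l' ~ List.finRange n :=
    ((perm_append_singleton v (u ++ w)).trans perm_middle.symm).trans hl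
  -- position formulas
  have hposv : pos (u ++ v :: w) (k + 1) = U.length := by
    rw [pos, hmapL, idxOf_append_of_notMem hk1U, idxOf_cons_self]
    try omega
  have hposU : ∀ a ∈ U, pos (u ++ v :: w) a = U.idxOf a := by
    intro a ha
    rw [pos, hmapL, idxOf_append_of_mem ha]
  have hposW : ∀ a ∈ W, pos (u ++ v :: w) a = U.length + (W.idxOf a + 1) := by
    intro a ha
    have hne : (k + 1) ≠ a := fun h => hk1W (h ▸ ha)
    rw [pos, hmapL, idxOf_append_of_notMem (fun h => hWU a ha h), idxOf_cons_ne _ hne]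
    try omega
  have hpos'U : ∀ a ∈ U, pos l' a = U.idxOf a := by
    intro a ha
    rw [pos, hmapL', idxOf_append_of_mem (mem_append_left _ ha), idxOf_append_of_mem ha]
  have hpos'W : ∀ a ∈ W, pos l' a = U.length + W.idxOf a := by
    intro a ha
    rw [pos, hmapL', idxOf_append_of_mem (mem_append_right _ ha),
      idxOf_append_of_notMem (fun h => hWU a ha h)]
  have hpos'v : pos l' (k + 1) = U.length + W.length := by
    have : (k + 1) ∉ U ++ W := by simp [hk1U, hk1W]
    rw [pos, hmapL', idxOf_append_of_notMem this, idxOf_cons_self, length_append]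
    try omega
  have hmemUW : ∀ a : ℕ, a < n → a ≠ k + 1 → a ∈ U ∨ a ∈ W := by
    intro a ha hak
    have : a ∈ (u ++ v :: w).map Fin.val := mem_map_val _ hl ha
    rw [hmapL] at this
    rcases mem_append.1 this with h | h
    · exact Or.inl h
    · rcases mem_cons.1 h with h' | h'
      · exact absurd h' hak
      · exact Or.inr h'
  -- relative order preservation
  have hpres : ∀ a b : ℕ, a < n → b < n → a ≠ k + 1 → b ≠ k + 1 →
      (pos l' b < pos l' a ↔ pos (u ++ v :: w) b < pos (u ++ v :: w) a) := by
    intro a b ha hb hak hbk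
    rcases hmemUW a ha hak with h1 | h1 <;> rcases hmemUW b hb hbk with h2 | h2
    · rw [hpos'U a h1, hpos'U b h2, hposU a h1, hposU b h2]
    · have := idxOf_lt_length_iff.2 h1
      rw [hpos'U a h1, hpos'W b h2, hposU a h1, hposW b h2]
      omega
    · have := idxOf_lt_length_iff.2 h2
      rw [hpos'W a h1, hpos'U b h2, hposW a h1, hposU b h2]
      omega
    · rw [hpos'W a h1, hpos'W b h2, hposW a h1, hposW b h2]
      omega
  have htail : ∀ a : ℕ, a < n → a ≠ k + 1 → pos l' a < pos l' (k + 1) := by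
    intro a ha hak
    rw [hpos'v]
    rcases hmemUW a ha hak with h1 | h1
    · have h2 := idxOf_lt_length_iff.2 h1
      rw [hpos'U a h1]
      omega
    · have h2 := idxOf_lt_length_iff.2 h1
      rw [hpos'W a h1]
      omega
  refine ⟨l', hperm', ?_, ?_⟩
  · -- conjugacy
    have hcomu : ∀ x ∈ u.map g, Commute (g v) x := by
      intro x hx
      obtain ⟨a, ha, rfl⟩ := mem_map.1 hx
      have haU : (a : ℕ) ∈ U := (hvUmem a).1 ha
      have hidx := idxOf_lt_length_iff.2 haU
      have hak : (a : ℕ) ≠ k := by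
        intro hak
        have e1 : pos (u ++ v :: w) (a : ℕ) = U.idxOf (a : ℕ) := hposU _ haU
        rw [hak] at e1 hidx
        omega
      have hak1 : (a : ℕ) ≠ k + 1 := by
        intro h
        exact hk1U (h ▸ haU)
      have hak2 : (a : ℕ) ≠ k + 2 := by
        intro hak2
        have h2 : k + 2 < n := hak2 ▸ a.isLt
        have h3 := hkmax h2
        have e1 : pos (u ++ v :: w) (a : ℕ) = U.idxOf (a : ℕ) := hposU _ haU
        rw [hak2] at e1 hidx
        omega
      have hdist : Nat.dist (v : ℕ) (a : ℕ) ≠ 1 := by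
        have hvval : (v : ℕ) = k + 1 := rfl
        simp only [Nat.dist, hvval]
        omega
      exact commute_of_dist hinv hcomm v a hdist
    have hAv : Commute (g v) ((u.map g).prod) := Commute.list_prod_right _ _ hcomu
    have e1 : ((u ++ v :: w).map g).prod =
        g v * ((u.map g).prod * (w.map g).prod) := by
      rw [map_append, prod_append, map_cons, prod_cons, ← mul_assoc, ← hAv.eq, mul_assoc]
    have e2 : (l'.map g).prod = ((u.map g).prod * (w.map g).prod) * g v := by
      simp [hl'def, prod_append, mul_assoc]
    rw [e1, e2]
    exact isConj_mul_swap _ _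
  · -- measure decreases
    have htK : muTerm (u ++ v :: w) k = n - k := by
      rw [muTerm, if_pos hkL]
    have htv : muTerm (u ++ v :: w) (k + 1) = 0 := by
      rw [muTerm, if_neg]
      intro hc
      have hc' : pos (u ++ v :: w) (k + 2) < pos (u ++ v :: w) (k + 1) := by
        have e : k + 1 + 1 = k + 2 := rfl
        rwa [e] at hc
      rcases lt_or_ge (k + 2) n with h2 | h2
      · exact absurd (hkmax h2) (by omega)
      · have h3 : k + 2 = n := by omega
        have e1 : pos (u ++ v :: w) (k + 2) = n := by rw [h3]; exact pos_out _ hl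
        have h5 := pos_lt (u ++ v :: w) hl hk1
        omega
    have ht'K : muTerm l' k = 0 := by
      rw [muTerm, if_neg (by have := htail k (by omega) (by omega); omega)]
    have ht'v : muTerm l' (k + 1) ≤ n - (k + 1) := by
      rw [muTerm]
      split <;> omega
    have hrest : ∀ j : ℕ, j < n → j ≠ k → j ≠ k + 1 → muTerm l' j = muTerm (u ++ v :: w) j := by
      intro j hj hjk hjk1
      rcases lt_or_ge (j + 1) n with h2 | h2
      · rw [muTerm, muTerm, if_congr (hpres j (j + 1) hj h2 hjk1 (by omega)) rfl rfl]
      · have h3 : j + 1 = n := by omega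
        have e1 : pos (u ++ v :: w) (j + 1) = n := by rw [h3]; exact pos_out _ hl
        have e2 : pos l' (j + 1) = n := by rw [h3]; exact pos_out _ hperm'
        have h5 := pos_lt (u ++ v :: w) hl hj
        have h5' := pos_lt l' hperm' hj
        rw [muTerm, muTerm, if_neg (by omega), if_neg (by omega)]
    have hkmem : k ∈ Finset.range n := Finset.mem_range.2 (by omega)
    have hk1mem : k + 1 ∈ (Finset.range n).erase k :=
      Finset.mem_erase.2 ⟨by omega, Finset.mem_range.2 hk1⟩
    have hsum : ∀ m : List (Fin n), mu m =
        muTerm m k + (muTerm m (k + 1) +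
          ∑ j ∈ ((Finset.range n).erase k).erase (k + 1), muTerm m j) := by
      intro m
      rw [mu, ← Finset.add_sum_erase _ _ hkmem, ← Finset.add_sum_erase _ _ hk1mem]
    have hcongr : ∑ j ∈ ((Finset.range n).erase k).erase (k + 1), muTerm l' j =
        ∑ j ∈ ((Finset.range n).erase k).erase (k + 1), muTerm (u ++ v :: w) j := by
      apply Finset.sum_congr rfl
      intro j hj
      have h1 := Finset.mem_erase.1 hj
      have h2 := Finset.mem_erase.1 h1.2
      exact hrest j (Finset.mem_range.1 h2.2) h2.1 h1.1
    rw [hsum l', hsum (u ++ v :: w), hcongr, htK, htv, ht'K]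
    omega

private lemma key (hinv : ∀ i, g i ^ 2 = 1)
    (hcomm : ∀ i j : Fin n, 1 < Nat.dist i.val j.val → (g i * g j) ^ 2 = 1) :
    ∀ (m : ℕ) (l : List (Fin n)), mu l ≤ m → l ~ List.finRange n →
      IsConj ((l.map g).prod) (((List.finRange n).map g).prod) := by
  classical
  have main : ∀ (m : ℕ) (l : List (Fin n)), mu l ≤ m → l ~ List.finRange n →
      IsConj ((l.map g).prod) (((List.finRange n).map g).prod) := by
    intro m
    induction m with
    | zero =>
      intro l hm hl
      have hs : ∀ j : ℕ, j + 1 < n → pos l j < pos l (j + 1) := by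
        intro j hj
        by_contra hc
        push_neg at hc
        have hne : pos l (j + 1) ≠ pos l j := by
          intro h
          have := pos_inj l hl hj (by omega) h
          omega
        have hlt : pos l (j + 1) < pos l j := by omega
        have hterm : muTerm l j = n - j := by rw [muTerm, if_pos hlt]
        have hle : muTerm l j ≤ mu l :=
          Finset.single_le_sum (f := muTerm l) (fun _ _ => Nat.zero_le _)
            (Finset.mem_range.2 (by omega))
        omega
      rw [sorted_case l hl hs]
    | succ m ih =>
      intro l hm hl
      by_cases hex : ∃ j : ℕ, j + 1 < n ∧ pos l (j + 1) < pos l j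
      · set S := (Finset.range n).filter (fun j => j + 1 < n ∧ pos l (j + 1) < pos l j) with hS
        have hSne : S.Nonempty := by
          obtain ⟨j, hj1, hj2⟩ := hex
          exact ⟨j, Finset.mem_filter.2 ⟨Finset.mem_range.2 (by omega), hj1, hj2⟩⟩
        set k := S.max' hSne with hk
        obtain ⟨-, hk1, hkL⟩ := Finset.mem_filter.1 (S.max'_mem hSne)
        have hkmax : k + 2 < n → pos l (k + 1) < pos l (k + 2) := by
          intro h2
          by_contra hc
          push_neg at hc
          have hne : pos l (k + 2) ≠ pos l (k + 1) := by
            intro h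
            have := pos_inj l hl h2 (by omega) h
            omega
          have hmem : k + 1 ∈ S := by
            refine Finset.mem_filter.2 ⟨Finset.mem_range.2 (by omega), by omega, ?_⟩
            have e : k + 1 + 1 = k + 2 := rfl
            rw [e]
            omega
          have := S.le_max' (k + 1) hmem
          omega
        obtain ⟨l', hl'p, hconj, hmu⟩ := step_lemma hinv hcomm l hl k hk1 hkL hkmax
        exact hconj.trans (ih l' (by omega) hl'p)
      · push_neg at hex
        have hs : ∀ j : ℕ, j + 1 < n → pos l j < pos l (j + 1) := by
          intro j hj
          have h1 := hex j hj
          have hne : pos l j ≠ pos l (j + 1) := by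
            intro h
            have := pos_inj l hl (by omega) hj h
            omega
          omega
        rw [sorted_case l hl hs]
  exact main

end Main

/-- Lemma of Humphreys, as used by Striker--Williams: let `G` be a
group generated by involutions `g 0, ..., g (n-1)` such that `(g i * g j)^2 = 1`
whenever `|i - j| > 1`. Then for any permutations `ω, ν` of the indices, the ordered
products `g (ω 0) * ⋯ * g (ω (n-1))` and `g (ν 0) * ⋯ * g (ν (n-1))` are conjugate
in `G`. -/
theorem conjugate_products_of_commuting_involutions {G : Type*} [Group G] (n : ℕ)
    (g : Fin n → G)
    (hgen : Subgroup.closure (Set.range g) = ⊤)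
    (hinv : ∀ i, g i ^ 2 = 1)
    (hcomm : ∀ i j : Fin n, 1 < Nat.dist i.val j.val → (g i * g j) ^ 2 = 1)
    (ω ν : Equiv.Perm (Fin n)) :
    IsConj (((List.finRange n).map fun i => g (ω i)).prod)
      (((List.finRange n).map fun i => g (ν i)).prod) := by
  classical
  have key' : ∀ l : List (Fin n), l ~ List.finRange n →
      IsConj ((l.map g).prod) (((List.finRange n).map g).prod) :=
    fun l hl => key hinv hcomm (mu l) l le_rfl hl
  have hperm : ∀ σ : Equiv.Perm (Fin n), (List.finRange n).map σ ~ List.finRange n := by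
    intro σ
    apply List.perm_of_nodup_nodup_toFinset_eq ((List.nodup_finRange n).map σ.injective)
      (List.nodup_finRange n)
    ext x
    simp only [List.mem_toFinset, List.mem_map, List.mem_finRange, true_and]
    exact ⟨fun _ => trivial, fun _ => ⟨σ.symm x, σ.apply_symm_apply x⟩⟩
  have h1 : ((List.finRange n).map fun i => g (ω i)) = ((List.finRange n).map ω).map g := by
    rw [List.map_map]; rfl
  have h2 : ((List.finRange n).map fun i => g (ν i)) = ((List.finRange n).map ν).map g := by
    rw [List.map_map]; rfl
  rw [h1, h2]
  exact (key' _ (hperm ω)).trans (key' _ (hperm ν)).symm
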